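/- arXiv:1904.08544 — 3 statements merged into one kernel-verified Lean document; each statement's English description precedes it below -/
import Mathlib

section
/- Let d ≥ 2 and let k be an integer with d/2 ≤ k ≤ d. Let z₁, …, z_k be i.i.d. Gaussian random variables with mean 0 and variance 1/d, and let ε ∈ (0,1]. Then Pr[ Σ_{j=1}^k z_j² ≤ ε²/64 ] ≤ ε^{d/4}. -/
open MeasureTheory ProbabilityTheory Real
open scoped NNReal ENNReal

lemma lintegral_pi_pow' (μ : Measure ℝ) [SigmaFinite μ] {f : ℝ → ℝ≥0∞} (hf : Measurable f) (n : ℕ) :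
    ∫⁻ x : Fin n → ℝ, ∏ i, f (x i) ∂(Measure.pi fun _ => μ) = (∫⁻ t, f t ∂μ) ^ n := by
  induction n with
  | zero => simp
  | succ n ih =>
    have hmp := (measurePreserving_piFinSuccAbove (fun _ : Fin (n+1) => μ) 0).symm
    rw [← hmp.lintegral_comp (by fun_prop)]
    simp only [MeasurableEquiv.piFinSuccAbove_symm_apply, Fin.insertNthEquiv,
      Equiv.coe_fn_mk, Fin.insertNth_zero]
    simp only [Fin.prod_univ_succ, Fin.zero_succAbove, cast_eq, Fin.cons_zero, Fin.cons_succ]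
    rw [lintegral_prod_mul (f := f) (g := fun y : Fin n → ℝ => ∏ x, f (y x)) hf.aemeasurable
      (Finset.aemeasurable_fun_prod _ fun i _ => hf.comp (measurable_pi_apply i) |>.aemeasurable),
      ih, pow_succ, mul_comm]

lemma gauss_lintegral_exp' (v : ℝ≥0) (hv : v ≠ 0) (lam : ℝ) (hlam : 0 < lam) :
    ∫⁻ t, ENNReal.ofReal (rexp (-(lam * t ^ 2))) ∂gaussianReal 0 v
      = ENNReal.ofReal (Real.sqrt (1 / (1 + 2 * lam * v))) := by
  have hvpos : (0:ℝ) < (v:ℝ) := by positivity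
  have hvne : (v:ℝ) ≠ 0 := hvpos.ne'
  set b : ℝ := 1 / (2 * v) + lam with hb
  have hbpos : 0 < b := by positivity
  rw [gaussianReal_of_var_ne_zero 0 hv,
    lintegral_withDensity_eq_lintegral_mul _ (measurable_gaussianPDF 0 v) (by fun_prop)]
  have h1 : ∀ t : ℝ, (gaussianPDF 0 v * fun t => ENNReal.ofReal (rexp (-(lam * t ^ 2)))) t
      = ENNReal.ofReal ((Real.sqrt (2 * π * v))⁻¹ * rexp (-b * t ^ 2)) := by
    intro t
    simp only [Pi.mul_apply, gaussianPDF, gaussianPDFReal, sub_zero]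
    rw [← ENNReal.ofReal_mul (by positivity)]
    congr 1
    rw [mul_assoc, ← Real.exp_add]
    congr 2
    rw [hb]
    field_simp
    ring
  simp_rw [h1]
  rw [← ofReal_integral_eq_lintegral_ofReal
      (((integrable_exp_neg_mul_sq hbpos).const_mul _))
      (ae_of_all _ fun t => by positivity)]
  congr 1
  rw [integral_const_mul, integral_gaussian]
  rw [← Real.sqrt_inv, ← Real.sqrt_mul (by positivity)]
  congr 1
  rw [hb]
  field_simp

lemma key_real_ineq (d k : ℕ) (hd : 2 ≤ d) (hk1 : (d : ℝ) / 2 ≤ (k : ℝ))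
    (ε : ℝ) (hε0 : 0 < ε) (hε1 : ε ≤ 1) :
    rexp ((d : ℝ) * ε / 64) * Real.sqrt (ε / (ε + 2)) ^ k ≤ ε ^ ((d : ℝ) / 4) := by
  have hx0 : (0:ℝ) < ε / (ε + 2) := by positivity
  have h1 : Real.sqrt (ε / (ε + 2)) ^ k = (ε / (ε + 2)) ^ ((k : ℝ) / 2) := by
    rw [Real.sqrt_eq_rpow, ← Real.rpow_natCast ((ε / (ε + 2)) ^ ((1:ℝ)/2)) k,
      ← Real.rpow_mul hx0.le]
    ring_nf
  rw [h1]
  have h2 : (ε / (ε + 2)) ^ ((k : ℝ) / 2) ≤ (ε / 2) ^ ((k : ℝ) / 2) := by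
    apply Real.rpow_le_rpow hx0.le _ (by positivity)
    apply div_le_div_of_nonneg_left hε0.le (by norm_num) (by linarith)
  have h3 : (ε / 2) ^ ((k : ℝ) / 2) ≤ (ε / 2) ^ ((d : ℝ) / 4) := by
    apply Real.rpow_le_rpow_of_exponent_ge (by positivity) (by linarith) (by linarith)
  have h4 : (ε / 2) ^ ((d : ℝ) / 4) = ε ^ ((d : ℝ) / 4) / 2 ^ ((d : ℝ) / 4) :=
    Real.div_rpow hε0.le (by norm_num) _
  have h5 : rexp ((d : ℝ) * ε / 64) ≤ 2 ^ ((d : ℝ) / 4) := by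
    rw [show (2:ℝ) ^ ((d : ℝ) / 4) = rexp (Real.log 2 * ((d:ℝ)/4)) by
      rw [← Real.rpow_def_of_pos (by norm_num)]]
    apply Real.exp_le_exp.2
    have hlog : (0.6931471803 : ℝ) < Real.log 2 := Real.log_two_gt_d9
    have hd0 : (0:ℝ) ≤ (d:ℝ) := Nat.cast_nonneg d
    nlinarith
  calc rexp ((d : ℝ) * ε / 64) * (ε / (ε + 2)) ^ ((k : ℝ) / 2)
      ≤ rexp ((d : ℝ) * ε / 64) * (ε / 2) ^ ((d : ℝ) / 4) := by
        apply mul_le_mul_of_nonneg_left (h2.trans h3) (Real.exp_nonneg _)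
    _ ≤ 2 ^ ((d : ℝ) / 4) * (ε ^ ((d : ℝ) / 4) / 2 ^ ((d : ℝ) / 4)) := by
        rw [h4]; apply mul_le_mul_of_nonneg_right h5 (by positivity)
    _ = ε ^ ((d : ℝ) / 4) := by
        rw [mul_div_assoc']
        field_simp


/-- **Small-ball estimate.** If `z₁, …, z_k` are i.i.d. `N(0, 1/d)` with `d/2 ≤ k ≤ d` and
`d ≥ 2`, then `Pr[∑ z_j² ≤ ε²/64] ≤ ε^{d/4}` for every `ε ∈ (0, 1]`. -/
theorem gaussian_norm_small_ball (d k : ℕ) (hd : 2 ≤ d)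
    (hk1 : (d : ℝ) / 2 ≤ (k : ℝ)) (hk2 : k ≤ d)
    (ε : ℝ) (hε0 : 0 < ε) (hε1 : ε ≤ 1) :
    (Measure.pi fun _ : Fin k => gaussianReal 0 ((d : ℝ≥0))⁻¹)
        {z : Fin k → ℝ | ∑ j, z j ^ 2 ≤ ε ^ 2 / 64}
      ≤ ENNReal.ofReal (ε ^ ((d : ℝ) / 4)) := by
  have hdpos : 0 < d := by omega
  have hd0 : (0:ℝ) < (d:ℝ) := by exact_mod_cast hdpos
  have hv : ((d : ℝ≥0))⁻¹ ≠ 0 := by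
    exact inv_ne_zero (Nat.cast_ne_zero.mpr hdpos.ne')
  set lam : ℝ := (d : ℝ) / ε with hlam_def
  have hlam : 0 < lam := by positivity
  set μ₀ := gaussianReal 0 ((d : ℝ≥0))⁻¹ with hμ₀
  set P := Measure.pi fun _ : Fin k => μ₀ with hP
  have : IsProbabilityMeasure P := by rw [hP]; infer_instance
  set f : ℝ → ℝ≥0∞ := fun t => ENNReal.ofReal (rexp (-(lam * t ^ 2))) with hf_def
  have hf : Measurable f := by fun_prop
  set g : (Fin k → ℝ) → ℝ≥0∞ :=
    fun x => ENNReal.ofReal (rexp (-(lam * ∑ j, x j ^ 2))) with hg_def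
  have hg : Measurable g := by fun_prop
  have hgf : ∀ x : Fin k → ℝ, g x = ∏ j, f (x j) := by
    intro x
    rw [hg_def, hf_def]
    simp only
    rw [Finset.mul_sum, ← Finset.sum_neg_distrib, Real.exp_sum,
      ENNReal.ofReal_prod_of_nonneg (fun i _ => Real.exp_nonneg _)]
  set c : ℝ≥0∞ := ENNReal.ofReal (rexp (-(lam * (ε ^ 2 / 64)))) with hc_def
  have hc0 : c ≠ 0 := by
    simp [hc_def, Real.exp_pos]
  have hctop : c ≠ ⊤ := ENNReal.ofReal_ne_top
  have hsub : {z : Fin k → ℝ | ∑ j, z j ^ 2 ≤ ε ^ 2 / 64} ⊆ {x | c ≤ g x} := by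
    intro x hx
    simp only [Set.mem_setOf_eq] at hx ⊢
    rw [hc_def, hg_def]
    apply ENNReal.ofReal_le_ofReal
    apply Real.exp_le_exp.2
    have := mul_le_mul_of_nonneg_left hx hlam.le
    linarith
  have markov : c * P {x | c ≤ g x} ≤ ∫⁻ x, g x ∂P :=
    mul_meas_ge_le_lintegral₀ hg.aemeasurable c
  have hint : ∫⁻ x, g x ∂P = (ENNReal.ofReal (Real.sqrt (ε / (ε + 2)))) ^ k := by
    simp_rw [hgf]
    rw [hP, hμ₀, lintegral_pi_pow' _ hf k, hf_def]
    congr 2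
    rw [gauss_lintegral_exp' _ hv lam hlam]
    congr 2
    rw [hlam_def]
    push_cast
    field_simp
  have hmain : c * P {z : Fin k → ℝ | ∑ j, z j ^ 2 ≤ ε ^ 2 / 64}
      ≤ ENNReal.ofReal (Real.sqrt (ε / (ε + 2)) ^ k) := by
    calc c * P {z : Fin k → ℝ | ∑ j, z j ^ 2 ≤ ε ^ 2 / 64}
        ≤ c * P {x | c ≤ g x} := by
          exact mul_le_mul_right (measure_mono hsub) c
      _ ≤ ∫⁻ x, g x ∂P := markov
      _ = (ENNReal.ofReal (Real.sqrt (ε / (ε + 2)))) ^ k := hint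
      _ = ENNReal.ofReal (Real.sqrt (ε / (ε + 2)) ^ k) :=
          (ENNReal.ofReal_pow (Real.sqrt_nonneg _) k).symm
  calc P {z : Fin k → ℝ | ∑ j, z j ^ 2 ≤ ε ^ 2 / 64}
      = c⁻¹ * (c * P {z : Fin k → ℝ | ∑ j, z j ^ 2 ≤ ε ^ 2 / 64}) := by
        rw [← mul_assoc, ENNReal.inv_mul_cancel hc0 hctop, one_mul]
    _ ≤ c⁻¹ * ENNReal.ofReal (Real.sqrt (ε / (ε + 2)) ^ k) := mul_le_mul_right hmain _
    _ = ENNReal.ofReal (rexp (lam * (ε ^ 2 / 64))) * ENNReal.ofReal (Real.sqrt (ε / (ε + 2)) ^ k) := by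
        rw [hc_def, ← ENNReal.ofReal_inv_of_pos (Real.exp_pos _), ← Real.exp_neg, neg_neg]
    _ = ENNReal.ofReal (rexp (lam * (ε ^ 2 / 64)) * Real.sqrt (ε / (ε + 2)) ^ k) :=
        (ENNReal.ofReal_mul (Real.exp_nonneg _)).symm
    _ ≤ ENNReal.ofReal (ε ^ ((d : ℝ) / 4)) := by
        apply ENNReal.ofReal_le_ofReal
        have heq : lam * (ε ^ 2 / 64) = (d : ℝ) * ε / 64 := by
          rw [hlam_def]; field_simp
        rw [heq]
        exact key_real_ineq d k hd hk1 ε hε0 hε1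
end

section
/- Let d ≥ 2, let i be an integer with 0 ≤ i ≤ d/2, let W ⊆ ℝ^d be a linear subspace of dimension i, and let ε ∈ (0,1]. If x is drawn uniformly at random from the unit sphere S_d = {x ∈ ℝ^d : ‖x‖₂ = 1} and v denotes the orthogonal projection of x onto the orthogonal complement W^⊥, then Pr[ ‖v‖₂ ≤ ε^{1.5}/16 ] ≤ 2·ε^{d/4}. -/
open MeasureTheory ProbabilityTheory Metric Pointwise
open scoped ENNReal NNReal

/-- The surface measure σ on the unit sphere `S_d ⊆ ℝ^d`. -/
noncomputable def sphereMeasure (d : ℕ) :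
    Measure (sphere (0 : EuclideanSpace ℝ (Fin d)) 1) :=
  (volume : Measure (EuclideanSpace ℝ (Fin d))).toSphere

/-- The uniform probability measure `U_d = σ / C_d` on the unit sphere. -/
noncomputable def uniformSphere (d : ℕ) :
    Measure (sphere (0 : EuclideanSpace ℝ (Fin d)) 1) :=
  (sphereMeasure d Set.univ)⁻¹ • sphereMeasure d

/-- The total surface area `C_d = σ(S_d)`. -/
noncomputable def Cd (d : ℕ) : ℝ := (sphereMeasure d Set.univ).toReal

/-- The standard Gaussian measure `N(0, I_d)` on `ℝ^d`. -/
noncomputable def stdGaussian (d : ℕ) : Measure (EuclideanSpace ℝ (Fin d)) :=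
  (Measure.pi fun _ : Fin d => gaussianReal 0 1).map
    (MeasurableEquiv.toLp 2 (Fin d → ℝ))

/-- The uniform probability measure on the interval `[-δ, δ]`. -/
noncomputable def unifIcc (δ : ℝ) : Measure ℝ :=
  (ENNReal.ofReal (2 * δ))⁻¹ • volume.restrict (Set.Icc (-δ) δ)

/-- The `ℓ₂` norm `‖f‖ = (E_{x ∼ U_d}[f(x)²])^{1/2}` of a density `f` on the sphere. -/
noncomputable def l2norm (d : ℕ) (f : sphere (0 : EuclideanSpace ℝ (Fin d)) 1 → ℝ) : ℝ :=
  Real.sqrt (∫ x, (f x) ^ 2 ∂(uniformSphere d))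

/-- `G_{f,a}(I_δ(b)) = Pr_{x ∼ f}[⟨a, x⟩ ∈ [b-δ, b+δ]]` for a density `f` on the sphere. -/
noncomputable def Gmass (d : ℕ) (f : sphere (0 : EuclideanSpace ℝ (Fin d)) 1 → ℝ)
    (a : EuclideanSpace ℝ (Fin d)) (b δ : ℝ) : ℝ :=
  ∫ x in {x : sphere (0 : EuclideanSpace ℝ (Fin d)) 1 |
      inner ℝ a (x : EuclideanSpace ℝ (Fin d)) ∈ Set.Icc (b - δ) (b + δ)},
    f x ∂(sphereMeasure d)

abbrev Euc (d : ℕ) := EuclideanSpace ℝ (Fin d)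


lemma num_ineq (d k : ℕ) (ε : ℝ) (hε0 : 0 < ε) (hε1 : ε ≤ 1)
    (hk : (d : ℝ) / 2 ≤ (k : ℝ)) :
    (ε ^ (1.5 : ℝ) / 16) ^ k * (Real.sqrt 2) ^ d ≤ 2 * ε ^ ((d : ℝ) / 4) := by
  set t : ℝ := ε ^ (1.5 : ℝ) / 16 with ht
  have htpos : 0 < t := by positivity
  have ht1 : t ≤ 1 := by
    have : ε ^ (1.5 : ℝ) ≤ 1 := Real.rpow_le_one hε0.le hε1 (by norm_num)
    rw [ht]; linarith
  have h1 : t ^ k = t ^ ((k : ℝ)) := (Real.rpow_natCast t k).symm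
  have h2 : t ^ ((k : ℝ)) ≤ t ^ ((d : ℝ) / 2) :=
    Real.rpow_le_rpow_of_exponent_ge htpos ht1 hk
  have h3 : (Real.sqrt 2) ^ d = (2 : ℝ) ^ ((d : ℝ) / 2) := by
    rw [← Real.rpow_natCast (Real.sqrt 2) d, Real.sqrt_eq_rpow,
      ← Real.rpow_mul (by norm_num)]
    ring_nf
  have h4 : t ^ ((d : ℝ) / 2) = ε ^ ((1.5 : ℝ) * ((d : ℝ) / 2)) / (16 : ℝ) ^ ((d : ℝ) / 2) := by
    rw [ht, Real.div_rpow (by positivity) (by norm_num), ← Real.rpow_mul hε0.le]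
  have h5 : (ε ^ ((1.5 : ℝ) * ((d : ℝ) / 2))) = ε ^ ((d : ℝ) / 4) * ε ^ ((d : ℝ) / 2) := by
    rw [← Real.rpow_add hε0]
    ring_nf
  have hnn : (0:ℝ) ≤ ε ^ ((d : ℝ) / 4) := Real.rpow_nonneg hε0.le _
  have h6 : (2:ℝ) ^ ((d : ℝ) / 2) / (16 : ℝ) ^ ((d : ℝ) / 2) = (8:ℝ)⁻¹ ^ ((d : ℝ) / 2) := by
    rw [← Real.div_rpow (by norm_num) (by norm_num)]
    norm_num
  have h7 : (8:ℝ)⁻¹ ^ ((d : ℝ) / 2) ≤ 1 :=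
    Real.rpow_le_one (by norm_num) (by norm_num) (by positivity)
  have h8 : ε ^ ((d : ℝ) / 2) ≤ 1 := Real.rpow_le_one hε0.le hε1 (by positivity)
  calc t ^ k * (Real.sqrt 2) ^ d
      = t ^ ((k : ℝ)) * (2:ℝ) ^ ((d : ℝ) / 2) := by rw [h1, h3]
    _ ≤ t ^ ((d : ℝ) / 2) * (2:ℝ) ^ ((d : ℝ) / 2) := by
        apply mul_le_mul_of_nonneg_right h2 (by positivity)
    _ = (ε ^ ((d : ℝ) / 4) * ε ^ ((d : ℝ) / 2)) *
          ((2:ℝ) ^ ((d : ℝ) / 2) / (16 : ℝ) ^ ((d : ℝ) / 2)) := by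
        rw [h4, h5]; ring
    _ = ε ^ ((d : ℝ) / 4) * (ε ^ ((d : ℝ) / 2) * (8:ℝ)⁻¹ ^ ((d : ℝ) / 2)) := by rw [h6]; ring
    _ ≤ ε ^ ((d : ℝ) / 4) * 1 := by
        apply mul_le_mul_of_nonneg_left _ hnn
        exact mul_le_one₀ h8 (by positivity) h7
    _ ≤ 2 * ε ^ ((d : ℝ) / 4) := by linarith


/-- **Uniform-sphere anti-concentration.** If `x` is uniform on the sphere `S_d ⊆ ℝ^d`
(`d ≥ 2`), `W` is a subspace of dimension `i ≤ d/2`, and `v` is the orthogonal projection of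
`x` onto `W^⊥`, then `Pr[‖v‖ ≤ ε^{1.5}/16] ≤ 2 ε^{d/4}` for every `ε ∈ (0, 1]`. -/
theorem uniform_sphere_projection_anti_concentration
    (d : ℕ) (hd : 2 ≤ d) (i : ℕ) (hi : (i : ℝ) ≤ (d : ℝ) / 2)
    (W : Submodule ℝ (EuclideanSpace ℝ (Fin d))) (hW : Module.finrank ℝ W = i)
    (ε : ℝ) (hε0 : 0 < ε) (hε1 : ε ≤ 1) :
    uniformSphere d
        {x : sphere (0 : EuclideanSpace ℝ (Fin d)) 1 |
          ‖(Wᗮ.orthogonalProjectionOnto (x : EuclideanSpace ℝ (Fin d)) :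
              EuclideanSpace ℝ (Fin d))‖ ≤ ε ^ (1.5 : ℝ) / 16}
      ≤ ENNReal.ofReal (2 * ε ^ ((d : ℝ) / 4)) := by
  
  classical
  set t : ℝ := ε ^ (1.5 : ℝ) / 16 with htdef
  have htpos : 0 < t := by positivity
  set k := Module.finrank ℝ Wᗮ with hkdef
  have hik : i + k = d := by
    have := Submodule.finrank_add_finrank_orthogonal W
    simp only [finrank_euclideanSpace_fin, hW] at this
    omega
  have hkd : k ≤ d := by omega
  have hk2 : (d : ℝ) / 2 ≤ (k : ℝ) := by
    have : (i : ℝ) + (k : ℝ) = (d : ℝ) := by exact_mod_cast congrArg Nat.cast hik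
    linarith
  -- adapted orthonormal basis
  let c0 := stdOrthonormalBasis ℝ Wᗮ
  let v : Fin d → Euc d :=
    fun j => if h : (j : ℕ) < k then (c0 ⟨j, h⟩ : Euc d) else 0
  let s : Set (Fin d) := {j | (j : ℕ) < k}
  have hon : Orthonormal ℝ (s.restrict v) := by
    have h1 : Orthonormal ℝ (fun j : Fin k => (c0 j : Euc d)) :=
      c0.orthonormal.comp_linearIsometry Wᗮ.subtypeₗᵢ
    have h2 : s.restrict v = (fun j : Fin k => (c0 j : Euc d)) ∘
        (fun j : s => (⟨(j : Fin d), j.2⟩ : Fin k)) := by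
      funext j
      simp only [Set.restrict_apply, Function.comp_apply, v]
      exact dif_pos j.2
    rw [h2]
    refine h1.comp _ (fun a b hab => ?_)
    have hv := congrArg Fin.val hab
    exact Subtype.ext (Fin.ext hv)
  obtain ⟨b, hb⟩ := hon.exists_orthonormalBasis_extension_of_card_eq
    ((finrank_euclideanSpace_fin).trans (Fintype.card_fin d).symm :
      Module.finrank ℝ (Euc d) = Fintype.card (Fin d))
  have hbW : ∀ j : Fin d, (j : ℕ) < k → b j ∈ Wᗮ := by
    intro j hj
    rw [hb j hj]
    show (if h : (j : ℕ) < k then (c0 ⟨j, h⟩ : Euc d) else 0) ∈ Wᗮ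
    rw [dif_pos hj]
    exact SetLike.coe_mem _
  -- Parseval
  have hpars : ∀ x : Euc d, ∑ j, (b.repr x j) ^ 2 = ‖x‖ ^ 2 := by
    intro x
    have h1 : ‖b.repr x‖ = ‖x‖ := b.repr.norm_map x
    rw [EuclideanSpace.norm_eq] at h1
    rw [← h1, Real.sq_sqrt (by positivity)]
    congr 1
    ext j
    rw [Real.norm_eq_abs, sq_abs]
  -- projection coordinates
  have hproj : ∀ (y : Euc d) (j : Fin d), (j : ℕ) < k →
      b.repr y j = b.repr ((Wᗮ.orthogonalProjectionOnto y : Euc d)) j := by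
    intro y j hj
    rw [b.repr_apply_apply, b.repr_apply_apply]
    have horth : (inner ℝ (b j) (y - (Wᗮ.orthogonalProjectionOnto y : Euc d)) : ℝ) = 0 :=
      Submodule.inner_right_of_mem_orthogonal (hbW j hj)
        (Submodule.sub_starProjection_mem_orthogonal (K := Wᗮ) y)
    have hsub := inner_sub_right (𝕜 := ℝ) (b j) y ((Wᗮ.orthogonalProjectionOnto y : Euc d))
    rw [horth] at hsub
    linarith [hsub]
  -- the coordinate sets
  let fil : Finset (Fin d) := Finset.univ.filter (fun j : Fin d => (j : ℕ) < k)
  let fil2 : Finset (Fin d) := Finset.univ.filter (fun j : Fin d => ¬ ((j : ℕ) < k))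
  let Sset : ℝ → Set (Euc d) := fun r =>
    {z | (∑ j ∈ fil, z j ^ 2) ≤ r ^ 2 ∧ (∑ j ∈ fil2, z j ^ 2) ≤ 1}
  have hcoordMeas : ∀ j : Fin d, Measurable (fun z : Euc d => z j) := by
    intro j
    exact (measurable_pi_apply j).comp (WithLp.measurable_ofLp 2 (Fin d → ℝ))
  have hSmeas : ∀ r : ℝ, MeasurableSet (Sset r) := by
    intro r
    apply MeasurableSet.inter
    · exact measurableSet_le (Finset.measurable_sum _ fun j _ => (hcoordMeas j).pow_const 2)
        measurable_const
    · exact measurableSet_le (Finset.measurable_sum _ fun j _ => (hcoordMeas j).pow_const 2)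
        measurable_const
  -- key membership
  have key : ∀ y : Euc d, ‖(Wᗮ.orthogonalProjectionOnto y : Euc d)‖ ≤ t → ‖y‖ ≤ 1 →
      b.repr y ∈ Sset t := by
    intro y hPy hy
    constructor
    · have e1 : ∀ j ∈ fil, (b.repr y j) ^ 2 =
          (b.repr ((Wᗮ.orthogonalProjectionOnto y : Euc d)) j) ^ 2 := by
        intro j hj
        rw [hproj y j (by simpa [fil] using hj)]
      rw [Finset.sum_congr rfl e1]
      calc (∑ j ∈ fil, (b.repr ((Wᗮ.orthogonalProjectionOnto y : Euc d)) j) ^ 2)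
          ≤ ∑ j, (b.repr ((Wᗮ.orthogonalProjectionOnto y : Euc d)) j) ^ 2 :=
            Finset.sum_le_sum_of_subset_of_nonneg (Finset.subset_univ _)
              (fun j _ _ => sq_nonneg _)
        _ = ‖(Wᗮ.orthogonalProjectionOnto y : Euc d)‖ ^ 2 := hpars _
        _ ≤ t ^ 2 := by
            apply pow_le_pow_left₀ (norm_nonneg _) hPy
    · calc (∑ j ∈ fil2, (b.repr y j) ^ 2)
          ≤ ∑ j, (b.repr y j) ^ 2 :=
            Finset.sum_le_sum_of_subset_of_nonneg (Finset.subset_univ _)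
              (fun j _ _ => sq_nonneg _)
        _ = ‖y‖ ^ 2 := hpars _
        _ ≤ 1 := by nlinarith [norm_nonneg y]
  -- event and cone
  set Ev : Set (sphere (0 : Euc d) 1) :=
    {x : sphere (0 : Euc d) 1 | ‖(Wᗮ.orthogonalProjectionOnto (x : Euc d) : Euc d)‖ ≤ t} with hEv
  have hEvMeas : MeasurableSet Ev := by
    have hcont : Continuous fun x : sphere (0 : Euc d) 1 =>
        ‖(Wᗮ.orthogonalProjectionOnto (x : Euc d) : Euc d)‖ := by
      apply Continuous.norm
      exact continuous_subtype_val.comp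
        ((Wᗮ.orthogonalProjectionOnto).continuous.comp continuous_subtype_val)
    exact measurableSet_le hcont.measurable measurable_const
  have hcone : Set.Ioo (0:ℝ) 1 • ((↑) '' Ev : Set (Euc d)) ⊆ ⇑b.repr ⁻¹' (Sset t) := by
    rintro z hz
    rw [Set.mem_smul] at hz
    obtain ⟨r, hr, w, hw, rfl⟩ := hz
    obtain ⟨x, hx, rfl⟩ := hw
    apply key
    · have hps : Wᗮ.orthogonalProjectionOnto (r • (x : Euc d)) =
          r • Wᗮ.orthogonalProjectionOnto (x : Euc d) :=
        _root_.map_smul (Wᗮ.orthogonalProjectionOnto) r (x : Euc d)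
      rw [hps, Submodule.coe_smul, norm_smul, Real.norm_eq_abs,
        abs_of_pos hr.1]
      calc r * ‖(Wᗮ.orthogonalProjectionOnto (x : Euc d) : Euc d)‖ ≤ 1 * t := by
            apply mul_le_mul hr.2.le hx (norm_nonneg _) zero_le_one
        _ = t := one_mul t
    · rw [norm_smul, Real.norm_eq_abs, abs_of_pos hr.1]
      have hxn : ‖(x : Euc d)‖ = 1 := by
        have h2 := x.2
        simp only [mem_sphere_iff_norm, sub_zero] at h2
        exact h2
      rw [hxn, mul_one]
      exact hr.2.le
  -- linear scaling map
  let cvec : Fin d → ℝ := fun j => if (j : ℕ) < k then t else 1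
  let T : Euc d →ₗ[ℝ] Euc d := Matrix.toEuclideanLin (Matrix.diagonal cvec)
  have happ : ∀ (w : Euc d) (j : Fin d), T w j = cvec j * w j := by
    intro w j
    show Matrix.toLin' (Matrix.diagonal cvec) (WithLp.ofLp w) j = _
    rw [Matrix.toLin'_apply, Matrix.mulVec_diagonal]
  have hfilcard : fil.card = k := by
    have heq : fil = Finset.map ⟨Fin.castLE hkd, Fin.castLE_injective hkd⟩ Finset.univ := by
      ext j
      simp only [fil, Finset.mem_filter, Finset.mem_univ, true_and, Finset.mem_map,
        Function.Embedding.coeFn_mk]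
      constructor
      · intro h
        exact ⟨⟨(j : ℕ), h⟩, rfl⟩
      · rintro ⟨a, rfl⟩
        exact a.2
    rw [heq, Finset.card_map, Finset.card_univ, Fintype.card_fin]
  have hdet : LinearMap.det T = t ^ k := by
    have h1 : LinearMap.det T = ∏ j, cvec j :=
      (LinearMap.det_toLin (PiLp.basisFun 2 ℝ (Fin d)) (Matrix.diagonal cvec)).trans (Matrix.det_diagonal)
    rw [h1]
    show (∏ j : Fin d, (if (j : ℕ) < k then t else 1)) = t ^ k
    rw [Finset.prod_ite, Finset.prod_const, Finset.prod_const, one_pow, mul_one]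
    rw [show Finset.univ.filter (fun j : Fin d => (j : ℕ) < k) = fil from rfl, hfilcard]
  have himg : Sset t = T '' (Sset 1) := by
    ext z
    constructor
    · rintro ⟨h1, h2⟩
      refine ⟨(WithLp.toLp 2 (fun j : Fin d => if (j : ℕ) < k then z j / t else z j) : Euc d), ⟨?_, ?_⟩, ?_⟩
      · have e1 : ∀ j ∈ fil,
            ((WithLp.toLp 2 (fun j : Fin d => if (j : ℕ) < k then z j / t else z j) : Euc d) j) ^ 2
            = z j ^ 2 / t ^ 2 := by
          intro j hj
          have hjk : (j : ℕ) < k := by simpa [fil] using hj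
          show (if (j : ℕ) < k then z j / t else z j) ^ 2 = z j ^ 2 / t ^ 2
          rw [if_pos hjk, div_pow]
        rw [Finset.sum_congr rfl e1, ← Finset.sum_div, one_pow,
          div_le_one (by positivity)]
        exact h1
      · have e1 : ∀ j ∈ fil2,
            ((WithLp.toLp 2 (fun j : Fin d => if (j : ℕ) < k then z j / t else z j) : Euc d) j) ^ 2
            = z j ^ 2 := by
          intro j hj
          have hjk : ¬ ((j : ℕ) < k) := by simpa [fil2] using hj
          show (if (j : ℕ) < k then z j / t else z j) ^ 2 = z j ^ 2
          rw [if_neg hjk]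
        rw [Finset.sum_congr rfl e1]
        exact h2
      · ext j
        rw [happ]
        show (if (j : ℕ) < k then t else 1) *
            (if (j : ℕ) < k then z j / t else z j) = z j
        by_cases hjk : (j : ℕ) < k
        · rw [if_pos hjk, if_pos hjk, mul_div_cancel₀ _ (ne_of_gt htpos)]
        · rw [if_neg hjk, if_neg hjk, one_mul]
    · rintro ⟨w, ⟨h1, h2⟩, rfl⟩
      constructor
      · have e1 : ∀ j ∈ fil, (T w j) ^ 2 = t ^ 2 * w j ^ 2 := by
          intro j hj
          have hjk : (j : ℕ) < k := by simpa [fil] using hj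
          rw [happ]
          show ((if (j : ℕ) < k then t else 1) * w j) ^ 2 = t ^ 2 * w j ^ 2
          rw [if_pos hjk, mul_pow]
        rw [Finset.sum_congr rfl e1, ← Finset.mul_sum]
        calc t ^ 2 * ∑ j ∈ fil, w j ^ 2 ≤ t ^ 2 * 1 ^ 2 := by
              apply mul_le_mul_of_nonneg_left h1 (by positivity)
          _ = t ^ 2 := by ring
      · have e1 : ∀ j ∈ fil2, (T w j) ^ 2 = w j ^ 2 := by
          intro j hj
          have hjk : ¬ ((j : ℕ) < k) := by simpa [fil2] using hj
          rw [happ]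
          show ((if (j : ℕ) < k then t else 1) * w j) ^ 2 = w j ^ 2
          rw [if_neg hjk, one_mul]
        rw [Finset.sum_congr rfl e1]
        exact h2
  have hSball : Sset 1 ⊆ closedBall (0 : Euc d) (Real.sqrt 2) := by
    rintro z ⟨h1, h2⟩
    rw [mem_closedBall_zero_iff]
    rw [EuclideanSpace.norm_eq]
    have h2' : Real.sqrt 2 = Real.sqrt 2 := rfl
    apply Real.sqrt_le_sqrt
    have hsplit : (∑ j, ‖z j‖ ^ 2) = (∑ j ∈ fil, z j ^ 2) + ∑ j ∈ fil2, z j ^ 2 := by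
      rw [← Finset.sum_filter_add_sum_filter_not Finset.univ (fun j : Fin d => (j : ℕ) < k)]
      congr 1 <;> exact Finset.sum_congr rfl (fun j _ => by rw [Real.norm_eq_abs, sq_abs])
    rw [hsplit]
    have hop : (1:ℝ) ^ 2 = 1 := one_pow 2
    linarith
  -- measure computation
  have hμ : (volume : Measure (Euc d)) (Set.Ioo (0:ℝ) 1 • ((↑) '' Ev : Set (Euc d)))
      ≤ ENNReal.ofReal (t ^ k * (Real.sqrt 2) ^ d) *
        (volume : Measure (Euc d)) (ball (0 : Euc d) 1) := by
    calc (volume : Measure (Euc d)) (Set.Ioo (0:ℝ) 1 • ((↑) '' Ev : Set (Euc d)))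
        ≤ (volume : Measure (Euc d)) (⇑b.repr ⁻¹' (Sset t)) := measure_mono hcone
      _ = (volume : Measure (Euc d)) (Sset t) :=
          b.measurePreserving_repr.measure_preimage (hSmeas t).nullMeasurableSet
      _ = ENNReal.ofReal (|LinearMap.det T|) * (volume : Measure (Euc d)) (Sset 1) := by
          rw [himg, Measure.addHaar_image_linearMap]
      _ ≤ ENNReal.ofReal (t ^ k) *
            (volume : Measure (Euc d)) (closedBall (0 : Euc d) (Real.sqrt 2)) := by
          rw [hdet, abs_of_nonneg (by positivity)]
          exact mul_le_mul_right (measure_mono hSball) _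
      _ = ENNReal.ofReal (t ^ k) * (ENNReal.ofReal ((Real.sqrt 2) ^ d)
            * (volume : Measure (Euc d)) (ball (0 : Euc d) 1)) := by
          rw [Measure.addHaar_closedBall _ _ (Real.sqrt_nonneg 2), finrank_euclideanSpace_fin]
      _ = ENNReal.ofReal (t ^ k * (Real.sqrt 2) ^ d) *
            (volume : Measure (Euc d)) (ball (0 : Euc d) 1) := by
          rw [← mul_assoc, ← ENNReal.ofReal_mul (by positivity)]
  -- put it together
  have hσEv : sphereMeasure d Ev = (d : ℝ≥0∞) * (volume : Measure (Euc d))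
      (Set.Ioo (0:ℝ) 1 • ((↑) '' Ev : Set (Euc d))) := by
    rw [sphereMeasure, Measure.toSphere_apply' _ hEvMeas, finrank_euclideanSpace_fin]
  have hσuniv : sphereMeasure d (Set.univ) = (d : ℝ≥0∞) * (volume : Measure (Euc d))
      (ball (0 : Euc d) 1) := by
    rw [sphereMeasure, Measure.toSphere_apply_univ, finrank_euclideanSpace_fin]
  have hVpos : (volume : Measure (Euc d)) (ball (0 : Euc d) 1) ≠ 0 :=
    (measure_ball_pos _ _ one_pos).ne'
  have hVtop : (volume : Measure (Euc d)) (ball (0 : Euc d) 1) ≠ ⊤ :=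
    measure_ball_lt_top.ne
  have hd0 : (d : ℝ≥0∞) ≠ 0 := by
    simp only [ne_eq, Nat.cast_eq_zero]
    omega
  have hgoal : uniformSphere d Ev ≤ ENNReal.ofReal (t ^ k * (Real.sqrt 2) ^ d) := by
    rw [uniformSphere, Measure.smul_apply, smul_eq_mul, hσuniv]
    calc ((d : ℝ≥0∞) * (volume : Measure (Euc d)) (ball (0 : Euc d) 1))⁻¹ * sphereMeasure d Ev
        ≤ ((d : ℝ≥0∞) * (volume : Measure (Euc d)) (ball (0 : Euc d) 1))⁻¹ *
            ((d : ℝ≥0∞) * (ENNReal.ofReal (t ^ k * (Real.sqrt 2) ^ d) *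
              (volume : Measure (Euc d)) (ball (0 : Euc d) 1))) := by
          apply mul_le_mul_right
          rw [hσEv]
          exact mul_le_mul_right hμ _
      _ = ENNReal.ofReal (t ^ k * (Real.sqrt 2) ^ d) *
            (((d : ℝ≥0∞) * (volume : Measure (Euc d)) (ball (0 : Euc d) 1))⁻¹ *
              ((d : ℝ≥0∞) * (volume : Measure (Euc d)) (ball (0 : Euc d) 1))) := by
          ring
      _ = ENNReal.ofReal (t ^ k * (Real.sqrt 2) ^ d) := by
          rw [ENNReal.inv_mul_cancel (mul_ne_zero hd0 hVpos)
            (ENNReal.mul_ne_top (ENNReal.natCast_ne_top d) hVtop), mul_one]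
  refine hgoal.trans ?_
  exact ENNReal.ofReal_le_ofReal (num_ineq d k ε hε0 hε1 hk2)
end

section
/- Let n ≥ 1 be an integer and let ε ∈ (0,1]. Let X₁, …, X_n be independent {0,1}-valued random variables with Pr[X_j = 1] ≤ ε/4 for each j. Then Pr[ Σ_{j=1}^n X_j ≥ n/2 ] ≤ ε^{n/2}. -/
open MeasureTheory ProbabilityTheory

/-- **Chernoff-type bound.** If `X₁, …, X_n` are independent `{0,1}`-valued random variables
with `Pr[X_j = 1] ≤ ε/4` for each `j` and `ε ∈ (0, 1]`, then
`Pr[∑ X_j ≥ n/2] ≤ ε^{n/2}`. -/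
theorem chernoff_half_bound
    (n : ℕ) (hn : 1 ≤ n) (ε : ℝ) (hε0 : 0 < ε) (hε1 : ε ≤ 1)
    {Ω : Type*} [MeasurableSpace Ω] (P : Measure Ω) [IsProbabilityMeasure P]
    (X : Fin n → Ω → ℝ) (hmeas : ∀ j, Measurable (X j))
    (h01 : ∀ j ω, X j ω = 0 ∨ X j ω = 1)
    (hind : iIndepFun X P)
    (hp : ∀ j, P {ω | X j ω = 1} ≤ ENNReal.ofReal (ε / 4)) :
    P {ω | (n : ℝ) / 2 ≤ ∑ j, X j ω} ≤ ENNReal.ofReal (ε ^ ((n : ℝ) / 2)) := by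
  set k : ℕ := (n + 1) / 2 with hk
  have hkn : n ≤ 2 * k := by omega
  have hk2 : (n : ℝ) / 2 ≤ (k : ℝ) := by
    rw [div_le_iff₀ (by norm_num : (0:ℝ) < 2)]
    exact_mod_cast (by omega : n ≤ k * 2)
  -- inclusion into union over subsets of size k
  have hsub : {ω | (n : ℝ) / 2 ≤ ∑ j, X j ω} ⊆
      ⋃ S ∈ Finset.univ.powersetCard k, ⋂ j ∈ S, {ω | X j ω = 1} := by
    intro ω hω
    classical
    set T : Finset (Fin n) := Finset.univ.filter (fun j => X j ω = 1) with hT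
    have hsum : ∑ j, X j ω = (T.card : ℝ) := by
      rw [hT, Finset.card_filter]
      push_cast
      refine Finset.sum_congr rfl fun j _ => ?_
      rcases h01 j ω with h | h <;> simp [h]
    have hcardR : (n : ℝ) / 2 ≤ (T.card : ℝ) := by
      simpa [hsum] using hω
    have hcard : k ≤ T.card := by
      have h2 : (n : ℝ) ≤ (T.card : ℝ) * 2 := by linarith [(div_le_iff₀ (by norm_num : (0:ℝ) < 2)).1 hcardR]
      have : n ≤ T.card * 2 := by exact_mod_cast h2
      omega
    obtain ⟨S, hST, hScard⟩ := Finset.exists_subset_card_eq hcard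
    refine Set.mem_iUnion₂.2 ⟨S, ?_, ?_⟩
    · simp [Finset.mem_powersetCard, hScard]
    · simp only [Set.mem_iInter]
      intro j hj
      exact (Finset.mem_filter.1 (hST hj)).2
  have hε4 : (0:ℝ) ≤ ε / 4 := by linarith
  have hone : ∀ j, MeasurableSet[(inferInstance : MeasurableSpace ℝ).comap (X j)]
      {ω | X j ω = 1} := fun j => ⟨{1}, measurableSet_singleton 1, rfl⟩
  calc P {ω | (n : ℝ) / 2 ≤ ∑ j, X j ω}
      ≤ P (⋃ S ∈ Finset.univ.powersetCard k, ⋂ j ∈ S, {ω | X j ω = 1}) := measure_mono hsub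
    _ ≤ ∑ S ∈ Finset.univ.powersetCard k, P (⋂ j ∈ S, {ω | X j ω = 1}) :=
        measure_biUnion_finset_le _ _
    _ ≤ ∑ S ∈ Finset.univ.powersetCard k, ENNReal.ofReal ((ε / 4) ^ k) := by
        refine Finset.sum_le_sum fun S hS => ?_
        have hScard : S.card = k := (Finset.mem_powersetCard.1 hS).2
        rw [hind.meas_biInter (fun j _ => hone j)]
        calc ∏ j ∈ S, P {ω | X j ω = 1}
            ≤ ∏ _j ∈ S, ENNReal.ofReal (ε / 4) :=
              Finset.prod_le_prod' fun j _ => hp j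
          _ = ENNReal.ofReal ((ε / 4) ^ k) := by
              rw [Finset.prod_const, hScard, ← ENNReal.ofReal_pow hε4]
    _ = (Nat.choose n k : ENNReal) * ENNReal.ofReal ((ε / 4) ^ k) := by
        rw [Finset.sum_const, Finset.card_powersetCard, Finset.card_univ, Fintype.card_fin,
          nsmul_eq_mul]
    _ ≤ ENNReal.ofReal (ε ^ ((n : ℝ) / 2)) := by
        rw [← ENNReal.ofReal_natCast, ← ENNReal.ofReal_mul (by positivity)]
        refine ENNReal.ofReal_le_ofReal ?_
        have hchoose : (Nat.choose n k : ℝ) ≤ (4 : ℝ) ^ k := by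
          have h2 : Nat.choose n k ≤ 2 ^ n := by
            have hk' : k ∈ Finset.range (n + 1) := Finset.mem_range.2 (by omega)
            calc Nat.choose n k ≤ ∑ m ∈ Finset.range (n + 1), Nat.choose n m :=
                  Finset.single_le_sum (fun _ _ => Nat.zero_le _) hk'
              _ = 2 ^ n := Nat.sum_range_choose n
          calc (Nat.choose n k : ℝ) ≤ (2 : ℝ) ^ n := by exact_mod_cast h2
            _ ≤ (4 : ℝ) ^ k := by
                calc (2:ℝ)^n ≤ (2:ℝ)^(2*k) := by
                      exact pow_le_pow_right₀ (by norm_num) hkn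
                  _ = (4:ℝ)^k := by rw [pow_mul]; norm_num
        calc (Nat.choose n k : ℝ) * (ε / 4) ^ k ≤ (4:ℝ)^k * (ε / 4) ^ k := by
              exact mul_le_mul_of_nonneg_right hchoose (by positivity)
          _ = ε ^ k := by
              rw [← mul_pow]; congr 1; field_simp
          _ ≤ ε ^ ((n : ℝ) / 2) := by
              rw [← Real.rpow_natCast ε k]
              exact Real.rpow_le_rpow_of_exponent_ge hε0 hε1 hk2
end
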